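/- Let V satisfy the basic assumptions and let δ ∈ (0,1]. Then there exists a constant C_δ > 0 such that for every real k ≥ 1 and every y with y ≥ k(δ − 1) (equivalently k + y ≥ δk), the first-order Taylor remainder satisfies φ_k(y) := V(k+y) − V(k) − V'(k)y ≤ C_δ k^{−a−2} y². -/

import Mathlib

open Filter Set MeasureTheory
open scoped Classical ENNReal NNReal BigOperators

noncomputable section

/-- `lam V x` is λ(x) := inf_{(0,x)} V''. -/
def lam (V : ℝ → ℝ) (x : ℝ) : ℝ :=
  sInf (deriv (deriv V) '' Set.Ioo 0 x)

/-- The basic assumptions (Reg), (Sing), (Cvx), (Dec) on the interaction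
potential `V`, with decay exponent `a`. -/
structure BasicAssumptions (V : ℝ → ℝ) (a : ℝ) : Prop where
  nonneg : ∀ x : ℝ, 0 ≤ V x
  even : ∀ x : ℝ, V (-x) = V x
  pos : ∀ x : ℝ, x ≠ 0 → 0 < V x
  smooth : ContDiffOn ℝ 2 V {(0 : ℝ)}ᶜ
  sing : Filter.Tendsto V (nhdsWithin 0 {(0 : ℝ)}ᶜ) Filter.atTop
  cvx : ∀ x : ℝ, 0 < x → 0 < lam V x
  decV : Filter.Tendsto V Filter.atTop (nhds 0)
  decV' : Filter.Tendsto (deriv V) Filter.atTop (nhds 0)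
  one_lt_a : 1 < a
  decV'' : ∀ δ : ℝ, 0 < δ → ∃ c : ℝ, 0 < c ∧
    ∀ x : ℝ, δ ≤ |x| → deriv (deriv V) x ≤ c * |x| ^ (-(a + 2))

/-- The configuration space 𝒟_n. -/
def Dn (n : ℕ) : Set (Fin (n + 1) → ℝ) :=
  {x | x 0 = 0 ∧ x (Fin.last n) = 1 ∧ Monotone x}

/-- The energy E_n(x) := (1/n) Σ_{k=1}^{n} Σ_{j=0}^{n−k} V(n[x(j+k) − x(j)]),
valued in [0,∞], with the convention V(0) = +∞ from (Sing).  The double sum is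
written as a sum over all pairs q < p. -/
def En (V : ℝ → ℝ) (n : ℕ) (x : Fin (n + 1) → ℝ) : ℝ≥0∞ :=
  ENNReal.ofReal (1 / (n : ℝ)) *
    ∑ p : Fin (n + 1), ∑ q : Fin (n + 1),
      if (q : ℕ) < (p : ℕ) then
        (if x p = x q then ⊤ else ENNReal.ofReal (V ((n : ℝ) * (x p - x q))))
      else 0

/-- The first-order Taylor remainder φ_k(y) := V(k+y) − V(k) − V'(k)y. -/
def phi (V : ℝ → ℝ) (k y : ℝ) : ℝ :=
  V (k + y) - V k - deriv V k * y

/-- The lower-bound function Φ_k. -/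
def PhiLB (V : ℝ → ℝ) (k y : ℝ) : ℝ :=
  if y ≤ 1 then 1 / 2 * lam V (k + 1) * y ^ 2 else lam V (k + 1) * (y - 1 / 2)

/-- σ^n(i) := Σ_{k=i+1}^{n−i} min(k−i, n−i+1−k)|V'(k)| for 1 ≤ i ≤ ⌊n/2⌋,
and 0 otherwise. -/
def sigman (V : ℝ → ℝ) (n i : ℕ) : ℝ :=
  if 1 ≤ i ∧ i ≤ n / 2 then
    ∑ k ∈ Finset.Icc (i + 1) (n - i),
      ((min (k - i) (n + 1 - i - k) : ℕ) : ℝ) * |deriv V (k : ℝ)|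
  else 0

/-- σ^∞(i) := Σ_{k=i+1}^∞ (k−i)|V'(k)| for i ≥ 1 (index 0 is inert). -/
def sigmaInf (V : ℝ → ℝ) (i : ℕ) : ℝ :=
  if i = 0 then 0
  else ∑' m : ℕ, ((m + 1 : ℕ) : ℝ) * |deriv V ((i + 1 + m : ℕ) : ℝ)|

/-- Dom E_n^1 := {ε ∈ ℝ^n : −1 ≤ ε(i) ≤ n, Σ_{i=1}^n ε(i) = 0}, regarded as a
subset of ℓ²(ℕ) by extension by zero. -/
def DomEn1 (n : ℕ) : Set (ℕ → ℝ) :=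
  {ε | (∀ i, 1 ≤ i → i ≤ n → -1 ≤ ε i ∧ ε i ≤ (n : ℝ)) ∧
    (∀ i, i = 0 ∨ n < i → ε i = 0) ∧
    (∑ i ∈ Finset.Icc 1 n, ε i) = 0}

/-- The renormalised energy
E_n^1(ε) := Σ_{k=1}^{n} Σ_{j=0}^{n−k} [V(k + Σ_{l=j+1}^{j+k} ε(l)) − V(k)]. -/
def En1 (V : ℝ → ℝ) (n : ℕ) (ε : ℕ → ℝ) : ℝ :=
  ∑ k ∈ Finset.Icc 1 n, ∑ j ∈ Finset.range (n - k + 1),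
    (V ((k : ℝ) + ∑ l ∈ Finset.Icc (j + 1) (j + k), ε l) - V (k : ℝ))

/-- The quadratic-type part Q_n(ε) := Σ_{k=1}^{n} Σ_{j=0}^{n−k} φ_k(Σ_{l=j+1}^{k+j} ε(l)). -/
def Qn (V : ℝ → ℝ) (n : ℕ) (ε : ℕ → ℝ) : ℝ :=
  ∑ k ∈ Finset.Icc 1 n, ∑ j ∈ Finset.range (n - k + 1),
    phi V (k : ℝ) (∑ l ∈ Finset.Icc (j + 1) (j + k), ε l)

/-- The half truncation ε^{n,1/2}(i) := ε(i) for 1 ≤ i ≤ ⌈n/2⌉ and 0 otherwise. -/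
def half (n : ℕ) (ε : ℕ → ℝ) (i : ℕ) : ℝ :=
  if 1 ≤ i ∧ i ≤ (n + 1) / 2 then ε i else 0

/-- The reversal ε⃖(i) := ε(n+1−i) for 1 ≤ i ≤ n, extended by zero. -/
def rev (n : ℕ) (ε : ℕ → ℝ) (i : ℕ) : ℝ :=
  if 1 ≤ i ∧ i ≤ n then ε (n + 1 - i) else 0

/-- Dom E_∞^l := {ε ∈ ℓ²(ℕ) : ε(i) ≥ −1 for all i ≥ 1} (index 0 is inert). -/
def DomEinfl : Set (ℕ → ℝ) :=
  {ε | Summable (fun i => ε i ^ 2) ∧ ε 0 = 0 ∧ ∀ i, 1 ≤ i → -1 ≤ ε i}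

/-- Q_∞(ε) := Σ_{k=1}^∞ Σ_{j=0}^∞ φ_k(Σ_{l=j+1}^{k+j} ε(l)), valued in [0,∞]
(the summands are nonnegative). -/
def Qinf (V : ℝ → ℝ) (ε : ℕ → ℝ) : ℝ≥0∞ :=
  ∑' (k : ℕ) (j : ℕ),
    ENNReal.ofReal (phi V ((k : ℝ) + 1) (∑ l ∈ Finset.Icc (j + 1) (j + k + 1), ε l))

/-- The linear term (σ^∞, ε)_{ℓ²(ℕ)} as an extended real (difference of the
sums of the positive and negative parts). -/
def linPart (V : ℝ → ℝ) (ε : ℕ → ℝ) : EReal :=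
  ((∑' i : ℕ, ENNReal.ofReal (sigmaInf V i * ε i) : ℝ≥0∞) : EReal) -
    ((∑' i : ℕ, ENNReal.ofReal (-(sigmaInf V i * ε i)) : ℝ≥0∞) : EReal)

/-- The limit boundary-layer energy E_∞^l(ε) := Q_∞(ε) + (σ^∞, ε), valued in
the extended reals. -/
def Einfl (V : ℝ → ℝ) (ε : ℕ → ℝ) : EReal :=
  (Qinf V ε : EReal) + linPart V ε

end

/-- Under the basic assumptions, the second derivative of `V` is nonnegative
on the positive half-line. -/
lemma aux_dd_nonneg (V : ℝ → ℝ) (a : ℝ) (h : BasicAssumptions V a)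
    (t : ℝ) (ht : 0 < t) : 0 ≤ deriv (deriv V) t := by
  have hx := h.cvx (t + 1) (by linarith)
  unfold lam at hx
  by_cases hb : BddBelow (deriv (deriv V) '' Set.Ioo 0 (t + 1))
  · have : sInf (deriv (deriv V) '' Set.Ioo 0 (t + 1)) ≤ deriv (deriv V) t :=
      csInf_le hb ⟨t, ⟨ht, by linarith⟩, rfl⟩
    linarith
  · rw [Real.sInf_of_not_bddBelow hb] at hx; linarith

/-- quadratic upper bound: for δ ∈ (0,1] there is C_δ > 0 with
φ_k(y) ≤ C_δ k^{−a−2} y² whenever k ≥ 1 and y ≥ k(δ−1). -/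
theorem statement5 (V : ℝ → ℝ) (a : ℝ) (h : BasicAssumptions V a)
    (δ : ℝ) (hδ0 : 0 < δ) (hδ1 : δ ≤ 1) :
    ∃ C : ℝ, 0 < C ∧ ∀ k : ℝ, 1 ≤ k → ∀ y : ℝ, k * (δ - 1) ≤ y →
      phi V k y ≤ C * k ^ (-(a + 2)) * y ^ 2 := by
  obtain ⟨c, hc0, hc⟩ := h.decV'' δ hδ0
  refine ⟨c * δ ^ (-(a + 2)), mul_pos hc0 (Real.rpow_pos_of_pos hδ0 _), ?_⟩
  intro k hk y hy
  have hk0 : (0 : ℝ) < k := lt_of_lt_of_le one_pos hk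
  set M : ℝ := c * δ ^ (-(a + 2)) * k ^ (-(a + 2)) with hM
  have hM0 : 0 ≤ M :=
    le_of_lt (mul_pos (mul_pos hc0 (Real.rpow_pos_of_pos hδ0 _))
      (Real.rpow_pos_of_pos hk0 _))
  set s : Set ℝ := Set.uIcc k (k + y) with hs
  -- every point of `s` is at least `δ * k`
  have hlow : ∀ t ∈ s, δ * k ≤ t := by
    intro t hts
    have h1 : δ * k ≤ k := by nlinarith
    have h2 : δ * k ≤ k + y := by nlinarith
    have := hts.1
    rcases le_total k (k + y) with hky | hky
    · have : min k (k + y) ≤ t := hts.1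
      simp [min_eq_left hky] at this; linarith
    · have : min k (k + y) ≤ t := hts.1
      simp [min_eq_right hky] at this; linarith
  have hdk0 : 0 < δ * k := mul_pos hδ0 hk0
  have hpos : ∀ t ∈ s, 0 < t := fun t hts => lt_of_lt_of_le hdk0 (hlow t hts)
  have hsub : s ⊆ {(0 : ℝ)}ᶜ := fun t hts => ne_of_gt (hpos t hts)
  -- bound on the second derivative on `s`
  have hdd : ∀ t ∈ s, ‖deriv (deriv V) t‖ ≤ M := by
    intro t hts
    have ht0 : 0 < t := hpos t hts
    have hδt : δ ≤ |t| := by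
      rw [abs_of_pos ht0]
      have := hlow t hts
      nlinarith
    have h1 : deriv (deriv V) t ≤ c * |t| ^ (-(a + 2)) := hc t hδt
    have h2 : |t| ^ (-(a + 2)) ≤ (δ * k) ^ (-(a + 2)) := by
      apply Real.rpow_le_rpow_of_nonpos hdk0
      · rw [abs_of_pos ht0]; exact hlow t hts
      · have := h.one_lt_a; linarith
    have h3 : (δ * k) ^ (-(a + 2)) = δ ^ (-(a + 2)) * k ^ (-(a + 2)) :=
      Real.mul_rpow hδ0.le hk0.le
    have hnn : 0 ≤ deriv (deriv V) t := aux_dd_nonneg V a h t ht0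
    rw [Real.norm_eq_abs, abs_of_nonneg hnn, hM]
    calc deriv (deriv V) t ≤ c * |t| ^ (-(a + 2)) := h1
      _ ≤ c * ((δ * k) ^ (-(a + 2))) := by
          exact mul_le_mul_of_nonneg_left h2 hc0.le
      _ = c * δ ^ (-(a + 2)) * k ^ (-(a + 2)) := by rw [h3]; ring
  -- differentiability facts
  have hV1 : ContDiffOn ℝ 1 (deriv V) {(0 : ℝ)}ᶜ :=
    h.smooth.deriv_of_isOpen isOpen_compl_singleton (by norm_num)
  have hVd' : ∀ t ∈ s, HasDerivAt (deriv V) (deriv (deriv V) t) t := by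
    intro t hts
    have : DifferentiableAt ℝ (deriv V) t :=
      (hV1.differentiableOn (by norm_num)).differentiableAt
        (isOpen_compl_singleton.mem_nhds (hsub hts))
    exact this.hasDerivAt
  have hVd : ∀ t ∈ s, HasDerivAt V (deriv V t) t := by
    intro t hts
    have : DifferentiableAt ℝ V t :=
      (h.smooth.differentiableOn (by norm_num)).differentiableAt
        (isOpen_compl_singleton.mem_nhds (hsub hts))
    exact this.hasDerivAt
  have hks : k ∈ s := Set.left_mem_uIcc
  have hkys : k + y ∈ s := Set.right_mem_uIcc
  -- first application: bound on deriv V t - deriv V k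
  have step1 : ∀ t ∈ s, ‖deriv V t - deriv V k‖ ≤ M * |y| := by
    intro t hts
    have := Convex.norm_image_sub_le_of_norm_hasDerivWithin_le
      (f := deriv V) (f' := deriv (deriv V)) (s := s) (C := M)
      (fun u hu => (hVd' u hu).hasDerivWithinAt) hdd (convex_uIcc _ _) hks hts
    have htk : ‖t - k‖ ≤ |y| := by
      rw [Real.norm_eq_abs, abs_sub_le_iff]
      rcases le_total 0 y with hy0 | hy0
      · have h1 : t ≤ k + y := by
          have := hts.2
          simpa [max_eq_right (by linarith : k ≤ k + y)] using this
        have h2 : k ≤ t := by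
          have := hts.1
          simpa [min_eq_left (by linarith : k ≤ k + y)] using this
        rw [abs_of_nonneg hy0]; constructor <;> linarith
      · have h1 : k + y ≤ t := by
          have := hts.1
          simpa [min_eq_right (by linarith : k + y ≤ k)] using this
        have h2 : t ≤ k := by
          have := hts.2
          simpa [max_eq_left (by linarith : k + y ≤ k)] using this
        rw [abs_of_nonpos hy0]; constructor <;> linarith
    calc ‖deriv V t - deriv V k‖ ≤ M * ‖t - k‖ := this
      _ ≤ M * |y| := mul_le_mul_of_nonneg_left htk hM0
  -- second application: bound on the Taylor remainder
  set g : ℝ → ℝ := fun u => V u - deriv V k * u with hg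
  have hgd : ∀ t ∈ s, HasDerivWithinAt g (deriv V t - deriv V k) s t := by
    intro t hts
    have h1 : HasDerivAt (fun u => deriv V k * u) (deriv V k) t := by
      simpa using (hasDerivAt_id t).const_mul (deriv V k)
    exact ((hVd t hts).sub h1).hasDerivWithinAt
  have step2 : ‖g (k + y) - g k‖ ≤ M * |y| * ‖(k + y) - k‖ :=
    Convex.norm_image_sub_le_of_norm_hasDerivWithin_le
      (f := g) (f' := fun t => deriv V t - deriv V k) (s := s) (C := M * |y|)
      hgd (fun t hts => step1 t hts) (convex_uIcc _ _) hks hkys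
  have hphi : phi V k y = g (k + y) - g k := by
    simp only [phi, hg]; ring
  have hfin : ‖g (k + y) - g k‖ ≤ M * y ^ 2 := by
    have : ((k + y) - k) = y := by ring
    rw [this, Real.norm_eq_abs] at step2
    calc ‖g (k + y) - g k‖ ≤ M * |y| * |y| := step2
      _ = M * y ^ 2 := by rw [mul_assoc, ← abs_mul, ← sq, abs_sq]
  calc phi V k y ≤ ‖g (k + y) - g k‖ := by
        rw [hphi, Real.norm_eq_abs]; exact le_abs_self _
    _ ≤ M * y ^ 2 := hfin
    _ = c * δ ^ (-(a + 2)) * k ^ (-(a + 2)) * y ^ 2 := by rw [hM]
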